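/- Hall-type obstruction for popular matchings with lists of length 2: if preference lists are strict of length at most 2 and G' (the graph of f- and s-edges) has no A-perfect matching, then any inclusion-minimal set S of people with |N_{G'}(S)| < |S| consists entirely of people who are even in G1 and whose s-item equals their second-choice item (not the last-resort item), and every item in N_{G'}(S) is odd in G' with respect to any maximum matching of G'. -/

import Mathlib

universe u v

/-- A matching assigns to each person at most one item, injectively on items. -/
def IsMatching {α β : Type*} (M : α → Option β) : Prop :=
  ∀ a a' b, M a = some b → M a' = some b → a = a'

/-- A matching using only edges of the bipartite graph `E`. -/
def IsMatchingOn {α β : Type*} (E : α → β → Prop) (M : α → Option β) : Prop :=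
  (∀ a b, M a = some b → E a b) ∧ IsMatching M

/-- Number of matched people (= number of edges of the matching). -/
noncomputable def msize {α β : Type*} [Fintype α] (M : α → Option β) : ℕ :=
  Nat.card {a // (M a).isSome}

/-- A maximum cardinality matching of the bipartite graph `E`. -/
def IsMaxMatchingOn {α β : Type*} [Fintype α] (E : α → β → Prop) (M : α → Option β) : Prop :=
  IsMatchingOn E M ∧ ∀ M', IsMatchingOn E M' → msize M' ≤ msize M

mutual
  /-- A person reachable from an `M`-unmatched vertex by an even-length alternating path
  (such paths start at an unmatched person). -/
  inductive EvenA {α : Type u} {β : Type v} (E : α → β → Prop) (M : α → Option β) : α → Prop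
    | base (a : α) : M a = none → EvenA E M a
    | step (a : α) (b : β) : OddB E M b → M a = some b → EvenA E M a
  /-- An item reachable from an `M`-unmatched vertex by an odd-length alternating path. -/
  inductive OddB {α : Type u} {β : Type v} (E : α → β → Prop) (M : α → Option β) : β → Prop
    | step (a : α) (b : β) : EvenA E M a → E a b → M a ≠ some b → OddB E M b
end

mutual
  /-- An item reachable from an `M`-unmatched vertex by an even-length alternating path
  (such paths start at an unmatched item). -/
  inductive EvenB {α : Type u} {β : Type v} (E : α → β → Prop) (M : α → Option β) : β → Prop
    | base (b : β) : (∀ a, M a ≠ some b) → EvenB E M b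
    | step (a : α) (b : β) : OddA E M a → M a = some b → EvenB E M b
  /-- A person reachable from an `M`-unmatched vertex by an odd-length alternating path. -/
  inductive OddA {α : Type u} {β : Type v} (E : α → β → Prop) (M : α → Option β) : α → Prop
    | step (a : α) (b : β) : EvenB E M b → E a b → M a ≠ some b → OddA E M a
end

/-- An unreachable person: no alternating path from an unmatched vertex reaches it. -/
def UnreachA {α β : Type*} (E : α → β → Prop) (M : α → Option β) (a : α) : Prop :=
  ¬ EvenA E M a ∧ ¬ OddA E M a

/-- An unreachable item: no alternating path from an unmatched vertex reaches it. -/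
def UnreachB {α β : Type*} (E : α → β → Prop) (M : α → Option β) (b : β) : Prop :=
  ¬ EvenB E M b ∧ ¬ OddB E M b

attribute [local instance] Classical.propDecidable

/-- The rank-1 subgraph `G1` of an instance with strict lists of length at most 2:
each person `a` has top item `f a`. -/
def E1f {α β : Type*} (f : α → β) (a : α) (b : β) : Prop := b = f a

/-- The `s`-item of a person: her most preferred item even in `G1`, namely her second
choice `z a` if it is even in `G1`, and otherwise her last-resort item `last a`. -/
noncomputable def sItemOf {α β : Type*} (f : α → β) (z : α → Option β) (last : α → β)
    (M1 : α → Option β) (a : α) : β :=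
  match z a with
  | some c => if EvenB (E1f f) M1 c then c else last a
  | none => last a

/-- The edges of the reduced graph `G'`: each person to her top item, and each person
even in `G1` to her `s`-item. -/
def Ered {α β : Type*} (f : α → β) (z : α → Option β) (last : α → β)
    (M1 : α → Option β) (a : α) (b : β) : Prop :=
  b = f a ∨ (EvenA (E1f f) M1 a ∧ b = sItemOf f z last M1 a)

/-- The neighborhood in `G'` of a set `S` of people. -/
noncomputable def NbhdOf {α β : Type*} [Fintype β] (E : α → β → Prop) (S : Finset α) :
    Finset β :=
  Finset.univ.filter (fun b => ∃ a ∈ S, E a b)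

/-! ### Auxiliary lemmas -/

lemma mem_nbhdOf {α β : Type*} [Fintype β] {E : α → β → Prop} {S : Finset α} {b : β} :
    b ∈ NbhdOf E S ↔ ∃ a ∈ S, E a b := by
  simp [NbhdOf]

lemma nbhdOf_mono {α β : Type*} [Fintype β] {E : α → β → Prop} {S S' : Finset α}
    (h : S' ⊆ S) : NbhdOf E S' ⊆ NbhdOf E S := by
  intro b hb
  obtain ⟨a, ha, hE⟩ := mem_nbhdOf.mp hb
  exact mem_nbhdOf.mpr ⟨a, h ha, hE⟩

/-- Any neighbor of an even person is odd. -/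
lemma even_adj_odd {α β : Type*} {E : α → β → Prop} {M : α → Option β} {a : α} {b : β}
    (hA : EvenA E M a) (hE : E a b) : OddB E M b := by
  by_cases h : M a = some b
  · cases hA with
    | base a h0 => rw [h0] at h; exact absurd h (by simp)
    | step a b' hodd hm =>
      rw [hm] at h
      injection h with h'
      exact h' ▸ hodd
  · exact OddB.step a b hA hE h

lemma sItemOf_cases {α β : Type*} (f : α → β) (z : α → Option β) (last : α → β)
    (M1 : α → Option β) (a : α) :
    (∃ c, z a = some c ∧ EvenB (E1f f) M1 c ∧ sItemOf f z last M1 a = c) ∨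
      sItemOf f z last M1 a = last a := by
  unfold sItemOf
  cases hz : z a with
  | none => exact Or.inr rfl
  | some c =>
    by_cases hc : EvenB (E1f f) M1 c
    · exact Or.inl ⟨c, rfl, hc, if_pos hc⟩
    · exact Or.inr (if_neg hc)

/-- Hall-type obstruction for strict lists of length at most 2: if `G'` has no
`A`-perfect matching, then every inclusion-minimal deficient set `S` consists of people
even in `G1` whose `s`-item is their second choice (not their last resort), and every
item of `N_{G'}(S)` is odd in `G'` with respect to any maximum matching of `G'`. -/
theorem hall_obstruction_length_two {α β : Type*} [Fintype α] [Fintype β]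
    (f : α → β) (z : α → Option β) (last : α → β)
    (hlastinj : Function.Injective last)
    (hpriv : ∀ a a', f a' ≠ last a ∧ z a' ≠ some (last a))
    (hne : ∀ a, f a ≠ last a ∧ z a ≠ some (f a) ∧ z a ≠ some (last a))
    (M1 : α → Option β) (hM1 : IsMaxMatchingOn (E1f f) M1)
    (hnoAperfect : ¬ ∃ M, IsMatchingOn (Ered f z last M1) M ∧ ∀ a, (M a).isSome)
    (S : Finset α)
    (hS : (NbhdOf (Ered f z last M1) S).card < S.card)
    (hmin : ∀ S' ⊂ S, ¬ ((NbhdOf (Ered f z last M1) S').card < S'.card)) :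
    (∀ a ∈ S, EvenA (E1f f) M1 a ∧
      ∃ c, z a = some c ∧ sItemOf f z last M1 a = c) ∧
    (∀ M', IsMaxMatchingOn (Ered f z last M1) M' →
      ∀ b ∈ NbhdOf (Ered f z last M1) S, OddB (Ered f z last M1) M' b) := by
  set E' := Ered f z last M1 with hE'def
  have hSne : S.Nonempty := Finset.card_pos.mp (lt_of_le_of_lt (Nat.zero_le _) hS)
  -- Part 1
  have key1 : ∀ a ∈ S, EvenA (E1f f) M1 a ∧
      ∃ c, z a = some c ∧ sItemOf f z last M1 a = c := by
    intro a ha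
    by_contra hcon
    -- produce a private neighbor of `a`
    have hprivnbr : ∃ p, E' a p ∧ ∀ a', E' a' p → a' = a := by
      by_cases hev : EvenA (E1f f) M1 a
      · -- then the s-item of a must be its last resort
        have hs : sItemOf f z last M1 a = last a := by
          rcases sItemOf_cases f z last M1 a with ⟨c, hzc, _, hsc⟩ | hl
          · exact absurd ⟨hev, c, hzc, hsc⟩ hcon
          · exact hl
        refine ⟨last a, Or.inr ⟨hev, hs.symm⟩, ?_⟩
        intro a' hEa'
        rcases hEa' with h | ⟨_, h⟩
        · exact absurd h.symm (hpriv a a').1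
        · -- h : last a = sItemOf f z last M1 a'
          rcases sItemOf_cases f z last M1 a' with ⟨c, hzc, _, hsc⟩ | hl
          · rw [hsc] at h
            exact absurd (by rw [hzc, ← h]) (hpriv a a').2
          · rw [hl] at h
            exact hlastinj h.symm
      · -- a is not even in G1; then f a is a private neighbor
        have hm1a : M1 a = some (f a) := by
          cases hma : M1 a with
          | none => exact absurd (EvenA.base a hma) hev
          | some c =>
            have hc : c = f a := hM1.1.1 a c hma
            exact congrArg some hc
        have hnotEvenB : ¬ EvenB (E1f f) M1 (f a) := by
          intro hEB
          cases hEB with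
          | base b hb => exact hb a hm1a
          | step a' b hodd hma' =>
            have haa : a' = a := hM1.1.2 a' a (f a) hma' hm1a
            subst haa
            cases hodd with
            | step a b' hEBb' hEab' hne' =>
              exact hne' (by rw [hEab']; exact hm1a)
        refine ⟨f a, Or.inl rfl, ?_⟩
        intro a' hEa'
        rcases hEa' with h | ⟨hev', h⟩
        · -- h : f a = f a'
          cases hma' : M1 a' with
          | none =>
            exact absurd (EvenA.step a (f a)
              (OddB.step a' (f a) (EvenA.base a' hma') h (by rw [hma']; simp)) hm1a) hev
          | some c =>
            have hc : c = f a' := hM1.1.1 a' c hma'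
            have hma'' : M1 a' = some (f a) := by rw [hma', hc, ← h]
            exact hM1.1.2 a' a (f a) hma'' hm1a
        · -- h : f a = sItemOf f z last M1 a'
          rcases sItemOf_cases f z last M1 a' with ⟨c, hzc, hcEven, hsc⟩ | hl
          · rw [hsc] at h
            rw [← h] at hcEven
            exact absurd hcEven hnotEvenB
          · rw [hl] at h
            exact absurd h (hpriv a' a).1
    obtain ⟨p, hpS, hpriv'⟩ := hprivnbr
    have hpN : p ∈ NbhdOf E' S := mem_nbhdOf.mpr ⟨a, ha, hpS⟩
    have hsub : NbhdOf E' (S.erase a) ⊆ (NbhdOf E' S).erase p := by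
      intro b hb
      obtain ⟨a', ha', hE⟩ := mem_nbhdOf.mp hb
      refine Finset.mem_erase.mpr ⟨?_, mem_nbhdOf.mpr ⟨a', Finset.mem_of_mem_erase ha', hE⟩⟩
      rintro rfl
      exact (Finset.ne_of_mem_erase ha') (hpriv' a' hE)
    have h1 : (NbhdOf E' (S.erase a)).card ≤ (NbhdOf E' S).card - 1 := by
      have := Finset.card_le_card hsub
      rwa [Finset.card_erase_of_mem hpN] at this
    have h2 := hmin (S.erase a) (Finset.erase_ssubset ha)
    have h3 : 1 ≤ (NbhdOf E' S).card := Finset.card_pos.mpr ⟨p, hpN⟩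
    have h4 : (S.erase a).card = S.card - 1 := Finset.card_erase_of_mem ha
    omega
  refine ⟨key1, ?_⟩
  -- Part 2
  intro M' hM' b hbN
  -- the neighborhood has cardinality exactly |S| - 1
  have hexact : (NbhdOf E' S).card + 1 = S.card := by
    obtain ⟨a0, ha0⟩ := hSne
    have h2 := hmin (S.erase a0) (Finset.erase_ssubset ha0)
    have h3 := Finset.card_le_card (nbhdOf_mono (E := E') (Finset.erase_subset a0 S))
    have h4 : (S.erase a0).card = S.card - 1 := Finset.card_erase_of_mem ha0
    omega
  set R := S.filter (fun a => EvenA E' M' a) with hRdef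
  set T := (NbhdOf E' S).filter (fun c => OddB E' M' c) with hTdef
  have hRsub : R ⊆ S := Finset.filter_subset _ _
  have hTsub : T ⊆ NbhdOf E' S := Finset.filter_subset _ _
  have hnb : ∀ a ∈ R, ∀ c, E' a c → c ∈ T := by
    intro a haR c hE
    have haS : a ∈ S := hRsub haR
    have hev : EvenA E' M' a := (Finset.mem_filter.mp haR).2
    exact Finset.mem_filter.mpr ⟨mem_nbhdOf.mpr ⟨a, haS, hE⟩, even_adj_odd hev hE⟩
  by_cases hRS : R = S
  · obtain ⟨a, haS, hE⟩ := mem_nbhdOf.mp hbN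
    exact (Finset.mem_filter.mp (hnb a (hRS ▸ haS) b hE)).2
  · exfalso
    have hss : R ⊂ S := Finset.ssubset_iff_subset_ne.mpr ⟨hRsub, hRS⟩
    -- every person of S \ R is matched by M', into (NbhdOf E' S) \ T, injectively
    have hmatched : ∀ a ∈ S \ R, ∃ c, M' a = some c := by
      intro a haSR
      obtain ⟨haS, haR⟩ := Finset.mem_sdiff.mp haSR
      cases hma : M' a with
      | none =>
        exact absurd (Finset.mem_filter.mpr ⟨haS, EvenA.base a hma⟩) haR
      | some c => exact ⟨c, rfl⟩
    have hinj : (S \ R).card ≤ ((NbhdOf E' S) \ T).card := by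
      apply Finset.card_le_card_of_injOn (fun a => (M' a).getD b)
      · intro a haSR
        obtain ⟨haS, haR⟩ := Finset.mem_sdiff.mp haSR
        obtain ⟨c, hc⟩ := hmatched a haSR
        have hEc : E' a c := hM'.1.1 a c hc
        show (M' a).getD b ∈ _
        rw [hc]
        simp only [Option.getD_some]
        refine Finset.mem_sdiff.mpr ⟨mem_nbhdOf.mpr ⟨a, haS, hEc⟩, ?_⟩
        intro hcT
        exact haR (Finset.mem_filter.mpr
          ⟨haS, EvenA.step a c (Finset.mem_filter.mp hcT).2 hc⟩)
      · intro a1 h1 a2 h2 heq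
        obtain ⟨c1, hc1⟩ := hmatched a1 h1
        obtain ⟨c2, hc2⟩ := hmatched a2 h2
        simp only [hc1, hc2, Option.getD_some] at heq
        exact hM'.1.2 a1 a2 c1 hc1 (by rw [hc2, heq])
    have hcR : (S \ R).card = S.card - R.card := Finset.card_sdiff_of_subset hRsub
    have hcT : ((NbhdOf E' S) \ T).card = (NbhdOf E' S).card - T.card :=
      Finset.card_sdiff_of_subset hTsub
    have hR_le : R.card < S.card := Finset.card_lt_card hss
    have hT_le : T.card ≤ (NbhdOf E' S).card := Finset.card_le_card hTsub
    -- the even people of S form a deficient set, contradicting minimality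
    have hcon := hmin R hss
    have hNRT : NbhdOf E' R ⊆ T := by
      intro c hc
      obtain ⟨a, haR, hE⟩ := mem_nbhdOf.mp hc
      exact hnb a haR c hE
    have hNR := Finset.card_le_card hNRT
    exact hcon (by omega)
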